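/- Let P be an ε_k-noisy sample of a compact set K in a metric space X, and let Q be the output of the Declutter algorithm on (P,k). Then for every x ∈ K there exists q ∈ Q with d(x,q) ≤ 5ε_k. -/

import Mathlib

open Metric

/-- Core loop of the Declutter algorithm: scan the (pre-sorted) list, keeping a point `p`
iff no previously kept point lies in the open ball `B(p, 2 f p)` (w.r.t. distance `d`). -/
noncomputable def declutterAux {X : Type*} (d : X → X → ℝ) (f : X → ℝ) :
    List X → List X → List X
  | Q, [] => Q
  | Q, p :: rest =>
    if ∀ q ∈ Q, 2 * f p ≤ d p q then declutterAux d f (Q ++ [p]) rest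
    else declutterAux d f Q rest

noncomputable def declutter {X : Type*} (d : X → X → ℝ) (f : X → ℝ) (L : List X) : List X :=
  declutterAux d f [] L

/-- `Q` is a possible output of the Declutter algorithm on `P`, with robust distance
function `f`: the points of `P` are processed in nondecreasing order of `f`
(ties broken arbitrarily). -/
def IsDeclutterOutput {X : Type*} (d : X → X → ℝ) (f : X → ℝ) (P : Finset X)
    (Q : List X) : Prop :=
  ∃ L : List X, L.Perm P.toList ∧ L.Pairwise (fun a b => f a ≤ f b) ∧ Q = declutter d f L

variable {X : Type*} [MetricSpace X]

/-- Sorted (nondecreasing) list of distances from `x` to the points of `P`. -/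
noncomputable def sortedDists (P : Finset X) (x : X) : List ℝ :=
  (P.val.map (dist x)).sort (· ≤ ·)

/-- The k-distance: root mean square of the distances to the k nearest neighbors in `P`. -/
noncomputable def kdist (P : Finset X) (k : ℕ) (x : X) : ℝ :=
  Real.sqrt ((1 / (k : ℝ)) * (((sortedDists P x).take k).map (fun r => r ^ 2)).sum)

/-- `P` is an ε_k-noisy sample of `K`:
(1) the k-distance is at most ε on `K`; (2) every point of the space is within
`kdist + ε` of `K`. -/
def NoisySample (P : Finset X) (k : ℕ) (K : Set X) (ε : ℝ) : Prop :=
  (∀ x ∈ K, kdist P k x ≤ ε) ∧ ∀ x : X, infDist x K ≤ kdist P k x + ε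

/-! ### Auxiliary lemmas -/


theorem exists_sub_of_le_map' {α β : Type*} [DecidableEq α] [DecidableEq β] (f : α → β)
    (s : Multiset α) :
    ∀ t : Multiset β, t ≤ s.map f → ∃ u : Multiset α, u ≤ s ∧ u.map f = t := by
  induction s using Multiset.induction_on with
  | empty => intro t ht; simp at ht; exact ⟨0, le_refl _, by simp [ht]⟩
  | cons a s ih =>
    intro t ht
    by_cases h : f a ∈ t
    · have h1 : t.erase (f a) ≤ s.map f := by
        have := Multiset.erase_le_erase (f a) ht
        simpa using this
      obtain ⟨u, hu, hum⟩ := ih _ h1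
      exact ⟨a ::ₘ u, Multiset.cons_le_cons a hu, by
        rw [Multiset.map_cons, hum, Multiset.cons_erase h]⟩
    · have h1 : t ≤ s.map f := by
        have := Multiset.erase_le_erase (f a) ht
        rwa [Multiset.erase_of_notMem h, Multiset.map_cons, Multiset.erase_cons_head] at this
      obtain ⟨u, hu, hum⟩ := ih _ h1
      exact ⟨u, le_trans hu (Multiset.le_cons_self s a), hum⟩

theorem take_sum_le_aux : ∀ (l : List ℝ), l.Pairwise (· ≤ ·) →
    ∀ u : Multiset ℝ, u ≤ ↑l → (l.take (Multiset.card u)).sum ≤ u.sum := by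
  intro l
  induction l with
  | nil =>
    intro _ u hu
    have : u = 0 := Multiset.le_zero.mp (by simpa using hu)
    simp [this]
  | cons a l ih =>
    intro hs u hu
    rcases List.pairwise_cons.mp hs with ⟨ha, hl⟩
    by_cases h0 : u = 0
    · simp [h0]
    obtain ⟨c, hc⟩ := Multiset.exists_mem_of_ne_zero h0
    by_cases hmem : a ∈ u
    · have h1 : u.erase a ≤ ↑l := by
        have := Multiset.erase_le_erase a hu
        rwa [show ((a :: l : List ℝ) : Multiset ℝ) = a ::ₘ ↑l from rfl,
          Multiset.erase_cons_head] at this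
      have := ih hl _ h1
      have hcard : Multiset.card u = Multiset.card (u.erase a) + 1 := by
        rw [Multiset.card_erase_of_mem hmem]
        exact (Nat.succ_pred_eq_of_pos (Multiset.card_pos_iff_exists_mem.mpr ⟨a, hmem⟩)).symm
      rw [hcard, List.take_succ_cons, List.sum_cons]
      have hsum : u.sum = a + (u.erase a).sum := by
        conv_lhs => rw [← Multiset.cons_erase hmem]
        simp
      rw [hsum]
      exact add_le_add_right this a
    · have hu' : u ≤ ↑l := by
        have := Multiset.erase_le_erase a hu
        rwa [Multiset.erase_of_notMem hmem,
          show ((a :: l : List ℝ) : Multiset ℝ) = a ::ₘ ↑l from rfl,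
          Multiset.erase_cons_head] at this
      have hcl : c ∈ l := by
        have := Multiset.mem_of_le hu' hc
        simpa using this
      have hac : a ≤ c := ha c hcl
      have h1 : u.erase c ≤ ↑l := le_trans (Multiset.erase_le c u) hu'
      have := ih hl _ h1
      have hcard : Multiset.card u = Multiset.card (u.erase c) + 1 := by
        rw [Multiset.card_erase_of_mem hc]
        exact (Nat.succ_pred_eq_of_pos (Multiset.card_pos_iff_exists_mem.mpr ⟨c, hc⟩)).symm
      rw [hcard, List.take_succ_cons, List.sum_cons]
      have hsum : u.sum = c + (u.erase c).sum := by
        conv_lhs => rw [← Multiset.cons_erase hc]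
        simp
      rw [hsum]
      exact add_le_add hac this

theorem take_sq_sum_le (l : List ℝ) (hl : l.Pairwise (· ≤ ·)) (h0 : ∀ r ∈ l, 0 ≤ r)
    (u : Multiset ℝ) (hu : u ≤ ↑l) :
    ((l.take (Multiset.card u)).map (fun r => r ^ 2)).sum
      ≤ (u.map (fun r => r ^ 2)).sum := by
  have hs : (l.map (fun r => r ^ 2)).Pairwise (· ≤ ·) := by
    rw [List.pairwise_map]
    refine hl.imp_of_mem ?_
    intro a b hab hbb h
    exact pow_le_pow_left₀ (h0 a hab) h 2
  have hu2 : (u.map (fun r => r ^ 2)) ≤ ↑(l.map (fun r => r ^ 2)) := by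
    rw [← Multiset.map_coe]
    exact Multiset.map_le_map hu
  have := take_sum_le_aux _ hs _ hu2
  rwa [Multiset.card_map, ← List.map_take] at this

theorem sortedDists_coe (P : Finset X) (x : X) :
    ((sortedDists P x : List ℝ) : Multiset ℝ) = P.val.map (dist x) :=
  Multiset.sort_eq _ _

theorem sortedDists_length (P : Finset X) (x : X) :
    (sortedDists P x).length = P.card := by
  rw [sortedDists, Multiset.length_sort, Multiset.card_map]
  rfl

theorem sortedDists_sorted (P : Finset X) (x : X) :
    (sortedDists P x).Pairwise (· ≤ ·) := Multiset.pairwise_sort _ _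

theorem sortedDists_nonneg (P : Finset X) (x : X) : ∀ r ∈ sortedDists P x, 0 ≤ r := by
  intro r hr
  have : r ∈ ((sortedDists P x : List ℝ) : Multiset ℝ) := by simpa using hr
  rw [sortedDists_coe] at this
  obtain ⟨p, _, rfl⟩ := Multiset.mem_map.mp this
  exact dist_nonneg

theorem kdist_nonneg (P : Finset X) (k : ℕ) (x : X) : 0 ≤ kdist P k x :=
  Real.sqrt_nonneg _

theorem kdist_sq (P : Finset X) (k : ℕ) (x : X) :
    (kdist P k x) ^ 2
      = (1 / (k : ℝ)) * (((sortedDists P x).take k).map (fun r => r ^ 2)).sum := by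
  rw [kdist, Real.sq_sqrt]
  apply mul_nonneg
  · positivity
  · apply List.sum_nonneg
    intro r hr
    obtain ⟨s, _, rfl⟩ := List.mem_map.mp hr
    positivity

theorem exists_nearest (P : Finset X) (k : ℕ) (hk : 1 ≤ k) (hkP : k ≤ P.card) (x : X) :
    ∃ p ∈ P, dist x p ≤ kdist P k x := by
  have hlen : (sortedDists P x).length = P.card := sortedDists_length P x
  have hne : sortedDists P x ≠ [] := by
    intro h
    rw [h] at hlen
    simp at hlen
    omega
  obtain ⟨h, tl, heq⟩ := List.exists_cons_of_ne_nil hne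
  have hmem : h ∈ P.val.map (dist x) := by
    rw [← sortedDists_coe]
    simp [heq]
  obtain ⟨p, hp, hpd⟩ := Multiset.mem_map.mp hmem
  refine ⟨p, hp, ?_⟩
  have hh0 : 0 ≤ h := hpd ▸ dist_nonneg
  have hmin : ∀ r ∈ sortedDists P x, h ≤ r := by
    intro r hr
    rw [heq] at hr
    rcases List.mem_cons.mp hr with rfl | hr'
    · exact le_refl r
    · exact (List.pairwise_cons.mp (heq ▸ sortedDists_sorted P x)).1 r hr'
  have hlentake : ((sortedDists P x).take k).length = k := by
    rw [List.length_take, hlen]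
    omega
  have hsum : (k : ℝ) * h ^ 2 ≤ (((sortedDists P x).take k).map (fun r => r ^ 2)).sum := by
    have h1 : (((sortedDists P x).take k).map (fun _ => h ^ 2)).sum
        ≤ (((sortedDists P x).take k).map (fun r => r ^ 2)).sum := by
      apply List.sum_le_sum
      intro r hr
      have hrl : r ∈ sortedDists P x := List.mem_of_mem_take hr
      exact pow_le_pow_left₀ hh0 (hmin r hrl) 2
    calc (k : ℝ) * h ^ 2 = (((sortedDists P x).take k).map (fun _ => h ^ 2)).sum := by
          rw [List.map_const', List.sum_replicate, hlentake, nsmul_eq_mul]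
      _ ≤ _ := h1
  have hk0 : (0 : ℝ) < k := by exact_mod_cast hk
  rw [hpd]
  calc h = Real.sqrt (h ^ 2) := (Real.sqrt_sq hh0).symm
    _ ≤ kdist P k x := by
        apply Real.sqrt_le_sqrt
        rw [div_mul_eq_mul_div, one_mul, le_div_iff₀ hk0]
        nlinarith [hsum]

theorem kdist_bound (P : Finset X) (k : ℕ) (hk : 1 ≤ k) (hkP : k ≤ P.card) (x p : X) :
    kdist P k p ^ 2 ≤ 2 * dist p x ^ 2 + 2 * kdist P k x ^ 2 := by
  classical
  have hk0 : (0 : ℝ) < k := by exact_mod_cast hk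
  set t : Multiset ℝ := ↑((sortedDists P x).take k) with ht
  have htle : t ≤ P.val.map (dist x) := by
    rw [← sortedDists_coe]
    exact ((sortedDists P x).take_sublist k).subperm
  obtain ⟨S, hS, hSm⟩ := exists_sub_of_le_map' (dist x) P.val t htle
  have hcardt : Multiset.card t = k := by
    rw [ht]
    simp [List.length_take, sortedDists_length]
    omega
  have hcardS : Multiset.card S = k := by
    rw [← Multiset.card_map (dist x) S, hSm, hcardt]
  -- sum over S of dist x q ^ 2 equals k * kdist x ^ 2 numerator
  have hTx : (S.map (fun q => dist x q ^ 2)).sum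
      = (((sortedDists P x).take k).map (fun r => r ^ 2)).sum := by
    have : S.map (fun q => dist x q ^ 2) = (S.map (dist x)).map (fun r => r ^ 2) := by
      rw [Multiset.map_map]; rfl
    rw [this, hSm, ht, Multiset.map_coe, Multiset.sum_coe]
  -- p's k-distance bounded by sum over S
  have hu : S.map (fun q => dist p q) ≤ ↑(sortedDists P p) := by
    rw [sortedDists_coe]
    exact Multiset.map_le_map hS
  have hA : (((sortedDists P p).take k).map (fun r => r ^ 2)).sum
      ≤ ((S.map (fun q => dist p q)).map (fun r => r ^ 2)).sum := by
    have := take_sq_sum_le (sortedDists P p) (sortedDists_sorted P p)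
      (sortedDists_nonneg P p) _ hu
    rwa [Multiset.card_map, hcardS] at this
  have hB : ((S.map (fun q => dist p q)).map (fun r => r ^ 2)).sum
      ≤ (S.map (fun q => 2 * dist p x ^ 2 + 2 * dist x q ^ 2)).sum := by
    rw [Multiset.map_map]
    apply Multiset.sum_map_le_sum_map
    intro q hq
    show dist p q ^ 2 ≤ 2 * dist p x ^ 2 + 2 * dist x q ^ 2
    have h1 : dist p q ≤ dist p x + dist x q := dist_triangle p x q
    have h2 : (0:ℝ) ≤ dist p q := dist_nonneg
    nlinarith [sq_nonneg (dist p x - dist x q)]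
  have hC : (S.map (fun q => 2 * dist p x ^ 2 + 2 * dist x q ^ 2)).sum
      = (k : ℝ) * (2 * dist p x ^ 2) + 2 * (S.map (fun q => dist x q ^ 2)).sum := by
    rw [Multiset.sum_map_add]
    congr 1
    · rw [Multiset.map_const', Multiset.sum_replicate, hcardS, nsmul_eq_mul]
    · rw [← Multiset.sum_map_mul_left]
  have hkp := kdist_sq P k p
  have hkx := kdist_sq P k x
  have hkxS : (S.map (fun q => dist x q ^ 2)).sum = (k : ℝ) * kdist P k x ^ 2 := by
    rw [hTx, hkx]
    field_simp
  have hfinal : (((sortedDists P p).take k).map (fun r => r ^ 2)).sum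
      ≤ (k : ℝ) * (2 * dist p x ^ 2) + 2 * ((k : ℝ) * kdist P k x ^ 2) := by
    rw [← hkxS]
    exact le_trans hA (le_trans hB (le_of_eq hC))
  rw [hkp]
  rw [div_mul_eq_mul_div, one_mul, div_le_iff₀ hk0]
  nlinarith [hfinal]

theorem mem_declutterAux {Y : Type*} (d : Y → Y → ℝ) (f : Y → ℝ) :
    ∀ (L Q : List Y) (q : Y), q ∈ Q → q ∈ declutterAux d f Q L := by
  intro L
  induction L with
  | nil => intro Q q h; simpa [declutterAux] using h
  | cons p rest ih =>
    intro Q q h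
    rw [declutterAux]
    split
    · exact ih _ q (by simp [h])
    · exact ih _ q h

theorem declutterAux_cover {Y : Type*} (d : Y → Y → ℝ) (f : Y → ℝ)
    (hd : ∀ p, d p p = 0) (hf : ∀ p, 0 ≤ f p) :
    ∀ (L Q : List Y), ∀ p ∈ L, ∃ q ∈ declutterAux d f Q L, d p q ≤ 2 * f p := by
  intro L
  induction L with
  | nil => intro Q p hp; simp at hp
  | cons a rest ih =>
    intro Q p hp
    rw [declutterAux]
    rcases List.mem_cons.mp hp with rfl | hp'
    · split
      · exact ⟨p, mem_declutterAux d f rest _ p (by simp), by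
          rw [hd]
          linarith [hf p]⟩
      · next h =>
        push_neg at h
        obtain ⟨q, hq, hlt⟩ := h
        exact ⟨q, mem_declutterAux d f rest _ q hq, hlt.le⟩
    · split
      · exact ih _ p hp'
      · exact ih _ p hp'

/-- Every point of the ground truth `K` has a point of the Declutter output within 5ε. -/
theorem declutter_covers_ground_truth (P : Finset X) (k : ℕ) (hk : 1 ≤ k)
    (hkP : k ≤ P.card) (K : Set X) (hK : IsCompact K) (hKne : K.Nonempty)
    (ε : ℝ) (hsample : NoisySample P k K ε)
    (Q : List X) (hQ : IsDeclutterOutput (fun a b => dist a b) (kdist P k) P Q) :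
    ∀ x ∈ K, ∃ q ∈ Q, dist x q ≤ 5 * ε := by
  intro x hx
  obtain ⟨p, hpP, hpd⟩ := exists_nearest P k hk hkP x
  have hkx : kdist P k x ≤ ε := hsample.1 x hx
  have hε : 0 ≤ ε := le_trans (kdist_nonneg P k x) hkx
  have hdx : dist x p ≤ ε := hpd.trans hkx
  have hb : kdist P k p ^ 2 ≤ 2 * dist p x ^ 2 + 2 * kdist P k x ^ 2 :=
    kdist_bound P k hk hkP x p
  have hdxp : dist p x ≤ ε := by rw [dist_comm]; exact hdx
  have hkp : kdist P k p ≤ 2 * ε := by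
    nlinarith [kdist_nonneg P k p, dist_nonneg (x := p) (y := x), kdist_nonneg P k x]
  obtain ⟨L, hperm, _, hQL⟩ := hQ
  have hpL : p ∈ L := hperm.mem_iff.mpr (by simpa using hpP)
  obtain ⟨q, hqQ, hdq⟩ := declutterAux_cover (fun a b => dist a b) (kdist P k)
    (fun p => dist_self p) (fun p => kdist_nonneg P k p) L [] p hpL
  refine ⟨q, by rw [hQL]; exact hqQ, ?_⟩
  have htri : dist x q ≤ dist x p + dist p q := dist_triangle x p q
  have hdq' : dist p q ≤ 2 * kdist P k p := hdq
  linarith
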